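/- Let S ⊆ ℕ₀^d be a GNS with corner c and let x ∈ SG(S) be a special gap. Then S ∪ {x} has corner c if and only if ∇_i(S, c) ≠ {x} for all i ∈ [d]. -/
import Mathlib


open scoped BigOperators

/-- A generalized numerical semigroup (GNS): a submonoid of ℕ₀^d with finite complement. -/
def IsGNS {d : ℕ} (S : Set (Fin d → ℕ)) : Prop :=
  0 ∈ S ∧ (∀ x ∈ S, ∀ y ∈ S, x + y ∈ S) ∧ Sᶜ.Finite

/-- `c` is a corner of `S`: (1) any tuple whose i-th coordinate is ≥ c i lies in S;
(2) for each i with c i ≥ 1 there is a tuple with i-th coordinate c i − 1 outside S. -/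
def IsCornerOf {d : ℕ} (S : Set (Fin d → ℕ)) (c : Fin d → ℕ) : Prop :=
  c ∈ S ∧
  (∀ i : Fin d, ∀ x : Fin d → ℕ, c i ≤ x i → x ∈ S) ∧
  (∀ i : Fin d, c i = 0 ∨ ∃ x : Fin d → ℕ, x i + 1 = c i ∧ x ∉ S)

theorem union_specialGap_corner_iff {d : ℕ} (S : Set (Fin d → ℕ)) (hS : IsGNS S)
    (c x : Fin d → ℕ) (hc : IsCornerOf S c)
    (hx : x ∈ Sᶜ ∧ (∀ s ∈ S, s ≠ 0 → x + s ∈ S) ∧ x + x ∈ S) :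
    IsCornerOf (S ∪ {x}) c ↔
      ∀ i : Fin d,
        {h ∈ Sᶜ | h i + 1 = c i ∧ ∀ j, j ≠ i → h j + 1 ≤ c j} ≠ {x} := by
  obtain ⟨hcS, hc2, hc3⟩ := hc
  obtain ⟨hxS, -, -⟩ := hx
  have hgap : ∀ h : Fin d → ℕ, h ∉ S → ∀ j, h j + 1 ≤ c j := by
    intro h hh j
    by_contra hcon
    exact hh (hc2 j h (by omega))
  constructor
  · rintro ⟨-, -, h3⟩ i heq
    rcases h3 i with h0 | ⟨y, hy1, hy2⟩
    · have hxmem : x ∈ {h ∈ Sᶜ | h i + 1 = c i ∧ ∀ j, j ≠ i → h j + 1 ≤ c j} := by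
        rw [heq]; rfl
      have := hxmem.2.1
      omega
    · have hyS : y ∉ S := fun h => hy2 (Or.inl h)
      have hyx : y ≠ x := fun h => hy2 (Or.inr h)
      have hy : y ∈ {h ∈ Sᶜ | h i + 1 = c i ∧ ∀ j, j ≠ i → h j + 1 ≤ c j} :=
        ⟨hyS, hy1, fun j _ => hgap y hyS j⟩
      rw [heq] at hy
      exact hyx hy
  · intro h
    refine ⟨Or.inl hcS, fun i z hz => Or.inl (hc2 i z hz), fun i => ?_⟩
    rcases hc3 i with h0 | ⟨y, hy1, hy2⟩
    · exact Or.inl h0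
    · right
      by_contra hcon
      push_neg at hcon
      apply h i
      apply Set.eq_singleton_iff_unique_mem.mpr
      constructor
      · have hyx : y = x := by
          rcases hcon y hy1 with h' | h'
          · exact absurd h' hy2
          · exact h'
        subst hyx
        exact ⟨hxS, hy1, fun j _ => hgap y hxS j⟩
      · rintro z ⟨hzS, hz1, -⟩
        rcases hcon z hz1 with h' | h'
        · exact absurd h' hzS
        · exact h'
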